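/- For all reals a, b ≥ 0 and every real k ≥ 1: (a+b)^k − a^k ≤ 4^k·(a^{k−1}b + b^k). -/

import Mathlib

open Real

lemma key_rpow_sub (x y k : ℝ) (hy : 0 ≤ y) (hxy : y ≤ x) (hk : 1 ≤ k) :
    x ^ k - y ^ k ≤ k * x ^ (k - 1) * (x - y) := by
  have hx : 0 ≤ x := hy.trans hxy
  rcases eq_or_lt_of_le hx with hx0 | hx0
  · have hy0 : y = 0 := le_antisymm (hxy.trans hx0.symm.le) hy
    have hkpos : 0 < k := lt_of_lt_of_le one_pos hk
    rw [← hx0, hy0, Real.zero_rpow hkpos.ne']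
    simp
  · set s : ℝ := y / x - 1 with hs
    have hs1 : -1 ≤ s := by
      have : 0 ≤ y / x := div_nonneg hy hx
      simp only [hs]; linarith
    have hb := one_add_mul_self_le_rpow_one_add hs1 hk
    have h1s : 1 + s = y / x := by ring
    rw [h1s, Real.div_rpow hy hx] at hb
    have hxk : 0 < x ^ k := Real.rpow_pos_of_pos hx0 k
    have hb' : (1 + k * s) * x ^ k ≤ y ^ k := (le_div_iff₀ hxk).mp hb
    have hxk_eq : x ^ k = x ^ (k - 1) * x := by
      rw [show k = (k - 1) + 1 by ring, Real.rpow_add_one hx0.ne']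
      ring_nf
    have hsx : s * x = y - x := by rw [hs, sub_mul, div_mul_cancel₀ y hx0.ne', one_mul]
    have h2 : s * x ^ k = (y - x) * x ^ (k - 1) := by
      rw [hxk_eq, ← hsx]; ring
    have h3 : k * (s * x ^ k) = k * ((y - x) * x ^ (k - 1)) := by rw [h2]
    nlinarith [hb', h3]

theorem stmt10 (a b k : ℝ) (ha : 0 ≤ a) (hb : 0 ≤ b) (hk : 1 ≤ k) :
    (a + b) ^ k - a ^ k ≤ (4:ℝ) ^ k * (a ^ (k - 1) * b + b ^ k) := by
  have hkpos : 0 < k := lt_of_lt_of_le one_pos hk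
  have h4 : (0:ℝ) < 4 := by norm_num
  rcases le_total b a with hba | hab
  · -- b ≤ a : use derivative bound
    have hkey := key_rpow_sub (a + b) a k ha (by linarith) hk
    simp only [add_sub_cancel_left] at hkey
    have h1 : (a + b) ^ (k - 1) ≤ (2 * a) ^ (k - 1) :=
      Real.rpow_le_rpow (by linarith) (by linarith) (by linarith)
    have h2 : (2 * a) ^ (k - 1) = 2 ^ (k - 1) * a ^ (k - 1) :=
      Real.mul_rpow (by norm_num) ha
    -- k * 2^(k-1) ≤ 4^k
    have hk2 : k ≤ 2 ^ k := by
      have := one_add_mul_self_le_rpow_one_add (by norm_num : (-1:ℝ) ≤ 1) hk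
      norm_num at this
      linarith
    have h2k : (2:ℝ) ^ (k - 1) ≤ 2 ^ k :=
      Real.rpow_le_rpow_of_exponent_le (by norm_num) (by linarith)
    have h4k : (2:ℝ) ^ k * 2 ^ k = 4 ^ k := by
      rw [← Real.mul_rpow (by norm_num) (by norm_num)]; norm_num
    have hap : 0 ≤ a ^ (k - 1) := Real.rpow_nonneg ha _
    have h2p : (0:ℝ) ≤ 2 ^ (k - 1) := Real.rpow_nonneg (by norm_num) _
    have h2kp : (0:ℝ) ≤ 2 ^ k := Real.rpow_nonneg (by norm_num) _
    have hbk : 0 ≤ b ^ k := Real.rpow_nonneg hb _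
    have h4kp : (0:ℝ) ≤ 4 ^ k := Real.rpow_nonneg (by norm_num) _
    have hchain : k * (a + b) ^ (k - 1) * b ≤ 4 ^ k * (a ^ (k - 1) * b) := by
      have e1 : k * (a + b) ^ (k - 1) * b ≤ k * (2 ^ (k - 1) * a ^ (k - 1)) * b := by
        rw [← h2]
        exact mul_le_mul_of_nonneg_right
          (mul_le_mul_of_nonneg_left h1 hkpos.le) hb
      have e2 : k * 2 ^ (k - 1) ≤ 4 ^ k := by
        calc k * 2 ^ (k - 1) ≤ 2 ^ k * 2 ^ k :=
              mul_le_mul hk2 h2k h2p h2kp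
          _ = 4 ^ k := h4k
      calc k * (a + b) ^ (k - 1) * b ≤ k * (2 ^ (k - 1) * a ^ (k - 1)) * b := e1
        _ = (k * 2 ^ (k - 1)) * (a ^ (k - 1) * b) := by ring
        _ ≤ 4 ^ k * (a ^ (k - 1) * b) :=
            mul_le_mul_of_nonneg_right e2 (mul_nonneg hap hb)
    have : 4 ^ k * (a ^ (k - 1) * b) ≤ 4 ^ k * (a ^ (k - 1) * b + b ^ k) := by
      nlinarith
    linarith
  · -- a ≤ b : (a+b)^k ≤ (2b)^k ≤ 4^k b^k
    have h1 : (a + b) ^ k ≤ (2 * b) ^ k :=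
      Real.rpow_le_rpow (by linarith) (by linarith) hkpos.le
    have h2 : (2 * b) ^ k = 2 ^ k * b ^ k := Real.mul_rpow (by norm_num) hb
    have h3 : (2:ℝ) ^ k ≤ 4 ^ k :=
      Real.rpow_le_rpow (by norm_num) (by norm_num) hkpos.le
    have hbk : 0 ≤ b ^ k := Real.rpow_nonneg hb _
    have hak : 0 ≤ a ^ k := Real.rpow_nonneg ha _
    have hap : 0 ≤ a ^ (k - 1) := Real.rpow_nonneg ha _
    have h4kp : (0:ℝ) ≤ 4 ^ k := Real.rpow_nonneg (by norm_num) _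
    have : (a + b) ^ k ≤ 4 ^ k * b ^ k := by
      calc (a + b) ^ k ≤ 2 ^ k * b ^ k := h2 ▸ h1
        _ ≤ 4 ^ k * b ^ k := mul_le_mul_of_nonneg_right h3 hbk
    nlinarith [mul_nonneg h4kp (mul_nonneg hap hb)]
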